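/- Let L = L₀ ⊕ L₁ be a complex Leibniz superalgebra with dim L₀ = n, dim L₁ = m ≥ 1, and nilindex equal to n + m + 1. Then m = n if n + m is even, and m = n + 1 if n + m is odd. -/

import Mathlib

/-- A complex Leibniz superalgebra: a complex vector space `V` with an internal
direct-sum decomposition `V = L0 ⊕ L1`, a bilinear bracket respecting the
`ℤ/2`-grading and satisfying the Leibniz superidentity (for homogeneous
second and third arguments). -/
structure LeibnizSuper (V : Type) [AddCommGroup V] [Module ℂ V] where
  bracket : V →ₗ[ℂ] V →ₗ[ℂ] V
  L0 : Submodule ℂ V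
  L1 : Submodule ℂ V
  compl : IsCompl L0 L1
  g00 : ∀ a ∈ L0, ∀ b ∈ L0, bracket a b ∈ L0
  g01 : ∀ a ∈ L0, ∀ b ∈ L1, bracket a b ∈ L1
  g10 : ∀ a ∈ L1, ∀ b ∈ L0, bracket a b ∈ L1
  g11 : ∀ a ∈ L1, ∀ b ∈ L1, bracket a b ∈ L0
  super_jacobi : ∀ (x : V) (α β : Bool) (y z : V),
    y ∈ (if α then L1 else L0) → z ∈ (if β then L1 else L0) →
    bracket x (bracket y z) =
      bracket (bracket x y) z - (if α && β then (-1 : ℂ) else 1) • bracket (bracket x z) y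

variable {V : Type} [AddCommGroup V] [Module ℂ V]

/-- Descending central series of a Leibniz superalgebra:
`dcs S k` is `L^{k+1}`, i.e. `dcs S 0 = L¹ = L`. -/
def LeibnizSuper.dcs (S : LeibnizSuper V) : ℕ → Submodule ℂ V
  | 0 => ⊤
  | k + 1 => Submodule.span ℂ {v | ∃ a ∈ S.dcs k, ∃ b : V, v = S.bracket a b}

/-- Descending central series of the even part `L₀` (a Leibniz algebra):
`dcs0 S k` is `L₀^{k+1}`, i.e. `dcs0 S 0 = L₀`. -/
def LeibnizSuper.dcs0 (S : LeibnizSuper V) : ℕ → Submodule ℂ V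
  | 0 => S.L0
  | k + 1 => Submodule.span ℂ {v | ∃ a ∈ S.dcs0 k, ∃ b ∈ S.L0, v = S.bracket a b}

/-- `G` generates the superalgebra: the smallest linear subspace containing `G`
and closed under the bracket is all of `V`. -/
def LeibnizSuper.generates (S : LeibnizSuper V) (G : Set V) : Prop :=
  ∀ p : Submodule ℂ V, G ⊆ p → (∀ a ∈ p, ∀ b ∈ p, S.bracket a b ∈ p) → p = ⊤

/-- The nilindex: the minimal `s ≥ 1` with `L^s = 0`. -/
noncomputable def LeibnizSuper.nilindex (S : LeibnizSuper V) : ℕ :=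
  sInf {s | 1 ≤ s ∧ S.dcs (s - 1) = ⊥}

/-- The characteristic-sequence condition `n₁ ≤ n - 2`, `m₁ ≤ m - 1`:
for every `x ∈ L₀ \ L₀²` the right multiplication operator `R_x`
satisfies `R_x^{n-2} = 0` on `L₀` and `R_x^{m-1} = 0` on `L₁`. -/
def LeibnizSuper.charSeqLE (S : LeibnizSuper V) (n m : ℕ) : Prop :=
  ∀ x ∈ S.L0, x ∉ S.dcs0 1 →
    (∀ v ∈ S.L0, ((S.bracket.flip x : Module.End ℂ V) ^ (n - 2)) v = 0) ∧
    (∀ v ∈ S.L1, ((S.bracket.flip x : Module.End ℂ V) ^ (m - 1)) v = 0)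

namespace LeibnizSuper

variable (S : LeibnizSuper V)

lemma dcs_succ (k : ℕ) :
    S.dcs (k + 1) = Submodule.span ℂ {v | ∃ a ∈ S.dcs k, ∃ b : V, v = S.bracket a b} := rfl

lemma bracket_mem_dcs {k : ℕ} {a : V} (ha : a ∈ S.dcs k) (b : V) :
    S.bracket a b ∈ S.dcs (k + 1) :=
  Submodule.subset_span ⟨a, ha, b, rfl⟩

lemma dcs_succ_le : ∀ k, S.dcs (k + 1) ≤ S.dcs k
  | 0 => le_top
  | (k + 1) => by
    rw [dcs_succ, dcs_succ]
    exact Submodule.span_mono (fun v ⟨a, ha, b, hb⟩ => ⟨a, dcs_succ_le k ha, b, hb⟩)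

lemma dcs_add_le (k j : ℕ) : S.dcs (k + j) ≤ S.dcs k := by
  induction j with
  | zero => exact le_rfl
  | succ j ih => exact le_trans (S.dcs_succ_le (k + j)) ih

lemma dcs_stab {k : ℕ} (h : S.dcs (k + 1) = S.dcs k) : ∀ j, S.dcs (k + j) = S.dcs k := by
  intro j
  induction j with
  | zero => rfl
  | succ j ih =>
    have : S.dcs (k + j + 1) = S.dcs (k + 1) := by rw [dcs_succ, dcs_succ, ih]
    rw [show k + (j+1) = k + j + 1 from rfl, this, h]

lemma decomp (v : V) : ∃ v0 ∈ S.L0, ∃ v1 ∈ S.L1, v0 + v1 = v :=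
  let ⟨a, b, ha, hb, h⟩ := Submodule.codisjoint_iff_exists_add_eq.mp S.compl.codisjoint v; ⟨a, ha, b, hb, h⟩

lemma jac_homog {k : ℕ} {a : V} (ha : a ∈ S.dcs k) (α β : Bool) {y z : V}
    (hy : y ∈ (if α then S.L1 else S.L0)) (hz : z ∈ (if β then S.L1 else S.L0)) :
    S.bracket a (S.bracket y z) ∈ S.dcs (k + 2) := by
  rw [S.super_jacobi a α β y z hy hz]
  exact sub_mem (S.bracket_mem_dcs (S.bracket_mem_dcs ha y) z)
    (Submodule.smul_mem _ _ (S.bracket_mem_dcs (S.bracket_mem_dcs ha z) y))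

lemma jac {k : ℕ} {a : V} (ha : a ∈ S.dcs k) (y z : V) :
    S.bracket a (S.bracket y z) ∈ S.dcs (k + 2) := by
  obtain ⟨y0, hy0, y1, hy1, rfl⟩ := S.decomp y
  obtain ⟨z0, hz0, z1, hz1, rfl⟩ := S.decomp z
  have e : S.bracket (y0 + y1) (z0 + z1)
      = S.bracket y0 z0 + S.bracket y0 z1 + (S.bracket y1 z0 + S.bracket y1 z1) := by
    simp [map_add]; abel
  rw [e, map_add, map_add, map_add]
  have h00 := S.jac_homog ha false false (by simpa using hy0) (by simpa using hz0)
  have h01 := S.jac_homog ha false true (by simpa using hy0) (by simpa using hz1)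
  have h10 := S.jac_homog ha true false (by simpa using hy1) (by simpa using hz0)
  have h11 := S.jac_homog ha true true (by simpa using hy1) (by simpa using hz1)
  exact add_mem (add_mem h00 h01) (add_mem h10 h11)

end LeibnizSuper

/-- Remark 2.1 of the paper: if a complex Leibniz superalgebra with
`dim L₀ = n`, `dim L₁ = m ≥ 1` has maximal nilindex `n + m + 1`, then `m = n`
when `n + m` is even and `m = n + 1` when `n + m` is odd. -/
theorem leibnizSuper_maximal_nilindex_dims
    {V : Type} [AddCommGroup V] [Module ℂ V] [FiniteDimensional ℂ V]
    (S : LeibnizSuper V) (n m : ℕ) (hm : 1 ≤ m)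
    (hdim0 : Module.finrank ℂ S.L0 = n) (hdim1 : Module.finrank ℂ S.L1 = m)
    (hnil : S.nilindex = n + m + 1) :
    (Even (n + m) → m = n) ∧ (¬ Even (n + m) → m = n + 1) := by
  rw [LeibnizSuper.nilindex] at hnil
  set N := n + m with hN
  have hN1 : 1 ≤ N := by omega
  -- the nilindex set is nonempty and its min is N+1
  have hne0 : {s | 1 ≤ s ∧ S.dcs (s - 1) = ⊥}.Nonempty := by
    by_contra h
    rw [Set.not_nonempty_iff_eq_empty] at h
    rw [h, Nat.sInf_empty] at hnil
    omega
  have hmem := Nat.sInf_mem hne0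
  rw [hnil] at hmem
  have hbot : S.dcs N = ⊥ := by simpa using hmem.2
  have hnb : ∀ k < N, S.dcs k ≠ ⊥ := by
    intro k hk h
    have : sInf {s | 1 ≤ s ∧ S.dcs (s - 1) = ⊥} ≤ k + 1 :=
      Nat.sInf_le ⟨by omega, by simpa using h⟩
    omega
  -- strict descent
  have hstrict : ∀ k < N, S.dcs (k + 1) < S.dcs k := by
    intro k hk
    refine lt_of_le_of_ne (S.dcs_succ_le k) (fun h => ?_)
    have h2 := S.dcs_stab h (N - k)
    rw [show k + (N - k) = N from by omega, hbot] at h2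
    exact hnb k hk h2.symm
  -- finrank of dcs 1 is ≥ N - 1
  have hrank : ∀ j ≤ N, j ≤ Module.finrank ℂ (S.dcs (N - j)) := by
    intro j
    induction j with
    | zero => intro _; exact Nat.zero_le _
    | succ j ih =>
      intro hj
      have h1 := ih (by omega)
      have hlt : S.dcs (N - j) < S.dcs (N - (j + 1)) := by
        rw [show N - j = (N - (j+1)) + 1 from by omega]
        exact hstrict _ (by omega)
      have := Submodule.finrank_lt_finrank_of_lt hlt
      omega
  have hrank1 : N - 1 ≤ Module.finrank ℂ (S.dcs 1) := by
    have := hrank (N - 1) (by omega)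
    rwa [show N - (N - 1) = 1 from by omega] at this
  have hVrank : Module.finrank ℂ V = N := by
    rw [← Submodule.finrank_add_eq_of_isCompl S.compl, hdim0, hdim1]
  -- pick a homogeneous generator x ∉ dcs 1
  obtain ⟨x', _, hx'⟩ := SetLike.exists_of_lt (hstrict 0 hN1)
  obtain ⟨x0, hx0, x1, hx1, hxe⟩ := S.decomp x'
  have hhomog : ∃ x, x ∉ S.dcs 1 ∧ (x ∈ S.L0 ∨ x ∈ S.L1) := by
    by_cases h0 : x0 ∈ S.dcs 1
    · refine ⟨x1, fun h1 => hx' ?_, Or.inr hx1⟩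
      rw [← hxe]; exact add_mem h0 h1
    · exact ⟨x0, h0, Or.inl hx0⟩
  obtain ⟨x, hx, hxhom⟩ := hhomog
  -- span x ⊔ dcs 1 = ⊤
  have htop : Submodule.span ℂ {x} ⊔ S.dcs 1 = ⊤ := by
    have hlt : S.dcs 1 < Submodule.span ℂ {x} ⊔ S.dcs 1 :=
      SetLike.lt_iff_le_and_exists.mpr ⟨le_sup_right,
        x, Submodule.mem_sup_left (Submodule.mem_span_singleton_self x), hx⟩
    have h1 := Submodule.finrank_lt_finrank_of_lt hlt
    apply Submodule.eq_top_of_finrank_eq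
    have h2 := Submodule.finrank_le (Submodule.span ℂ {x} ⊔ S.dcs 1)
    omega
  set R : Module.End ℂ V := S.bracket.flip x with hR
  have hRapp : ∀ a : V, R a = S.bracket a x := fun a => rfl
  -- dcs (k+1) ≤ map R (dcs k) ⊔ dcs (k+2)
  have key1 : ∀ k, S.dcs (k + 1) ≤ Submodule.map R (S.dcs k) ⊔ S.dcs (k + 2) := by
    intro k
    rw [S.dcs_succ k]
    rw [Submodule.span_le]
    rintro v ⟨a, ha, b, rfl⟩
    have hb : b ∈ Submodule.span ℂ {x} ⊔ S.dcs 1 := htop ▸ Submodule.mem_top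
    obtain ⟨u, hu, w, hw, rfl⟩ := Submodule.mem_sup.mp hb
    obtain ⟨c, rfl⟩ := Submodule.mem_span_singleton.mp hu
    have e : S.bracket a (c • x + w) = c • R a + S.bracket a w := by
      rw [map_add, map_smul, hRapp]
    rw [SetLike.mem_coe, e]
    refine add_mem (Submodule.mem_sup_left (Submodule.smul_mem _ _ ⟨a, ha, rfl⟩))
      (Submodule.mem_sup_right ?_)
    -- [a, w] ∈ dcs (k+2) since w ∈ dcs 1
    have hsub : S.dcs 1 ≤ Submodule.comap (S.bracket a) (S.dcs (k + 2)) := by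
      rw [S.dcs_succ 0, Submodule.span_le]
      rintro v ⟨p, _, q, rfl⟩
      exact S.jac ha p q
    exact hsub hw
  have key2 : ∀ k, Submodule.map R (S.dcs k) ≤ S.dcs (k + 1) := by
    intro k
    rw [Submodule.map_le_iff_le_comap]
    intro a ha
    exact S.bracket_mem_dcs ha x
  have key3 : ∀ k j, S.dcs (k + 1) ≤ Submodule.map R (S.dcs k) ⊔ S.dcs (k + 1 + j) := by
    intro k j
    induction j with
    | zero => exact le_sup_right
    | succ j ih =>
      rw [show k + 1 + j = k + j + 1 from by omega] at ih
      rw [show k + 1 + (j + 1) = k + j + 2 from by omega]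
      refine le_trans ih (sup_le le_sup_left (le_trans (key1 (k + j)) ?_))
      exact sup_le (le_trans (Submodule.map_mono (S.dcs_add_le k j)) le_sup_left) le_sup_right
  have keyEq : ∀ k, S.dcs (k + 1) = Submodule.map R (S.dcs k) := by
    intro k
    refine le_antisymm ?_ (key2 k)
    refine le_trans (key3 k N) ?_
    rw [show k + 1 + N = N + (k + 1) from by omega]
    have : S.dcs (N + (k + 1)) = ⊥ := le_bot_iff.mp (hbot ▸ S.dcs_add_le N (k + 1))
    rw [this, sup_bot_eq]
  -- the elements x, [x,x], [[x,x],x], ...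
  set xs : ℕ → V := fun k => (R ^ k) x with hxs
  have hxs0 : xs 0 = x := by simp [hxs]
  have hxssucc : ∀ k, xs (k + 1) = S.bracket (xs k) x := by
    intro k
    show (R ^ (k + 1)) x = S.bracket ((R ^ k) x) x
    rw [pow_succ']
    rfl
  have spanx : ∀ k, S.dcs k = Submodule.span ℂ {xs k} ⊔ S.dcs (k + 1) := by
    intro k
    induction k with
    | zero => rw [hxs0]; exact htop.symm
    | succ k ih =>
      rw [keyEq k, ih, Submodule.map_sup, ← keyEq (k + 1), Submodule.map_span,
        Set.image_singleton]
      congr 2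
      rw [hxssucc]
      rfl
  have tele : ∀ k, (⊤ : Submodule ℂ V) ≤
      Submodule.span ℂ {v | ∃ i < k, v = xs i} ⊔ S.dcs k := by
    intro k
    induction k with
    | zero => exact le_sup_right.trans (le_of_eq rfl)
    | succ k ih =>
      refine le_trans ih ?_
      rw [spanx k]
      refine sup_le (le_trans (Submodule.span_mono ?_) le_sup_left)
        (sup_le (le_trans (Submodule.span_mono ?_) le_sup_left) le_sup_right)
      · rintro v ⟨i, hi, rfl⟩; exact ⟨i, by omega, rfl⟩
      · rintro v rfl; exact ⟨k, by omega, rfl⟩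
  have hgen : (⊤ : Submodule ℂ V) ≤ Submodule.span ℂ {v | ∃ i < N, v = xs i} := by
    have := tele N
    rwa [hbot, sup_bot_eq] at this
  -- x must be odd
  have hxL1 : x ∈ S.L1 := by
    rcases hxhom with h0 | h1
    · exfalso
      have hall : ∀ i, xs i ∈ S.L0 := by
        intro i
        induction i with
        | zero => rwa [hxs0]
        | succ i ih => rw [hxssucc]; exact S.g00 _ ih _ h0
      have hL0top : S.L0 = ⊤ := by
        refine top_le_iff.mp (le_trans hgen ?_)
        rw [Submodule.span_le]
        rintro v ⟨i, _, rfl⟩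
        exact hall i
      have : S.L1 = ⊥ := by
        have hd := S.compl.disjoint
        rw [hL0top] at hd
        exact (disjoint_top.mp hd.symm)
      rw [this, finrank_bot] at hdim1
      omega
    · exact h1
  -- parity of xs
  have hpar : ∀ i, (i % 2 = 0 → xs i ∈ S.L1) ∧ (i % 2 = 1 → xs i ∈ S.L0) := by
    intro i
    induction i with
    | zero => exact ⟨fun _ => hxs0 ▸ hxL1, fun h => by omega⟩
    | succ i ih =>
      constructor
      · intro h
        rw [hxssucc]
        exact S.g01 _ (ih.2 (by omega)) _ hxL1
      · intro h
        rw [hxssucc]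
        exact S.g11 _ (ih.1 (by omega)) _ hxL1
  classical
  set Fe : Finset ℕ := (Finset.range N).filter (fun i => i % 2 = 0) with hFe
  set Fo : Finset ℕ := (Finset.range N).filter (fun i => i % 2 = 1) with hFo
  set E : Submodule ℂ V := Submodule.span ℂ ((Fe.image xs : Finset V) : Set V) with hE
  set O : Submodule ℂ V := Submodule.span ℂ ((Fo.image xs : Finset V) : Set V) with hO
  have hEL1 : E ≤ S.L1 := by
    rw [hE, Submodule.span_le]
    intro v hv
    obtain ⟨i, hi, rfl⟩ := Finset.mem_image.mp (by exact_mod_cast hv)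
    exact (hpar i).1 (Finset.mem_filter.mp hi).2
  have hOL0 : O ≤ S.L0 := by
    rw [hO, Submodule.span_le]
    intro v hv
    obtain ⟨i, hi, rfl⟩ := Finset.mem_image.mp (by exact_mod_cast hv)
    exact (hpar i).2 (Finset.mem_filter.mp hi).2
  have hEO : E ⊔ O = ⊤ := by
    refine top_le_iff.mp (le_trans hgen ?_)
    rw [Submodule.span_le]
    rintro v ⟨i, hi, rfl⟩
    by_cases h : i % 2 = 0
    · refine Submodule.mem_sup_left (Submodule.subset_span ?_)
      exact Finset.mem_coe.mpr (Finset.mem_image.mpr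
        ⟨i, Finset.mem_filter.mpr ⟨Finset.mem_range.mpr hi, h⟩, rfl⟩)
    · refine Submodule.mem_sup_right (Submodule.subset_span ?_)
      exact Finset.mem_coe.mpr (Finset.mem_image.mpr
        ⟨i, Finset.mem_filter.mpr ⟨Finset.mem_range.mpr hi, by omega⟩, rfl⟩)
  have hL1E : S.L1 = E := by
    have h1 : (E ⊔ O) ⊓ S.L1 = E ⊔ O ⊓ S.L1 := sup_inf_assoc_of_le O hEL1
    have h2 : O ⊓ S.L1 = ⊥ := by
      refine le_bot_iff.mp (le_trans (inf_le_inf_right S.L1 hOL0) ?_)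
      exact le_of_eq (disjoint_iff.mp S.compl.disjoint)
    rw [hEO, top_inf_eq, h2, sup_bot_eq] at h1
    exact h1
  have hL0O : S.L0 = O := by
    have h1 : (O ⊔ E) ⊓ S.L0 = O ⊔ E ⊓ S.L0 := sup_inf_assoc_of_le E hOL0
    have h2 : E ⊓ S.L0 = ⊥ := by
      refine le_bot_iff.mp (le_trans (inf_le_inf_right S.L0 hEL1) ?_)
      rw [inf_comm]
      exact le_of_eq (disjoint_iff.mp S.compl.disjoint)
    rw [sup_comm, hEO, top_inf_eq, h2, sup_bot_eq] at h1
    exact h1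
  -- counting
  have hcardE : Fe.card ≤ (N + 1) / 2 := by
    refine le_trans (Finset.card_le_card_of_injOn (fun i => i / 2) ?_ ?_)
      (le_of_eq (Finset.card_range _))
    · intro i hi
      obtain ⟨h1, h2⟩ := Finset.mem_filter.mp hi
      have h3 := Finset.mem_range.mp h1
      simp only [Finset.mem_coe, Finset.mem_range]
      omega
    · intro i hi j hj hij
      have e1 := (Finset.mem_filter.mp (Finset.mem_coe.mp hi)).2
      have e2 := (Finset.mem_filter.mp (Finset.mem_coe.mp hj)).2
      have e3 : i / 2 = j / 2 := hij
      omega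
  have hcardO : Fo.card ≤ N / 2 := by
    refine le_trans (Finset.card_le_card_of_injOn (fun i => i / 2) ?_ ?_)
      (le_of_eq (Finset.card_range _))
    · intro i hi
      obtain ⟨h1, h2⟩ := Finset.mem_filter.mp hi
      have h3 := Finset.mem_range.mp h1
      simp only [Finset.mem_coe, Finset.mem_range]
      omega
    · intro i hi j hj hij
      have e1 := (Finset.mem_filter.mp (Finset.mem_coe.mp hi)).2
      have e2 := (Finset.mem_filter.mp (Finset.mem_coe.mp hj)).2
      have e3 : i / 2 = j / 2 := hij
      omega
  have hmle : m ≤ (N + 1) / 2 := by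
    rw [← hdim1, hL1E, hE]
    exact le_trans (le_trans (finrank_span_finset_le_card _) (Finset.card_image_le)) hcardE
  have hnle : n ≤ N / 2 := by
    rw [← hdim0, hL0O, hO]
    exact le_trans (le_trans (finrank_span_finset_le_card _) (Finset.card_image_le)) hcardO
  constructor
  · intro h
    rw [Nat.even_iff] at h
    omega
  · intro h
    rw [Nat.not_even_iff] at h
    omega
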